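/- Let p, m be coprime with 1 < p < m, s the number of Euclidean algorithm steps for (m,p), p_j the remainders, and k_i the quotients, with k_s := p_{s-1}. Any integer r with 0 < r < p_j (for some 0 ≤ j < s) can be written as r = Σ_{i=j+1}^h α_i p_i with integers α_i satisfying 0 ≤ α_i ≤ k_i, α_h > 0, and the property that α_i = k_i implies α_{i+1} = 0 (where p_s = 1). -/

import Mathlib

theorem greedy_expansion_in_remainders
    (p m s : ℕ) (k P : ℕ → ℕ)
    (hcop : Nat.Coprime p m) (hp : 1 < p) (hpm : p < m) (hs : 1 ≤ s)
    (hP0 : P 0 = p)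
    (hm : m = k 0 * P 0 + P 1)
    (hrec : ∀ i, 1 ≤ i → i ≤ s - 1 → P (i - 1) = k i * P i + P (i + 1))
    (hdec : ∀ i, 1 ≤ i → i ≤ s → P i < P (i - 1))
    (hPs : P s = 1)
    (hks : k s = P (s - 1)) :
    ∀ r j : ℕ, j < s → 0 < r → r < P j →
      ∃ (α : ℕ → ℕ) (h : ℕ), j + 1 ≤ h ∧ h ≤ s ∧
        r = ∑ i ∈ Finset.Icc (j + 1) h, α i * P i ∧
        (∀ i ∈ Finset.Icc (j + 1) h, α i ≤ k i) ∧
        0 < α h ∧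
        (∀ i, j + 1 ≤ i → i < h → α i = k i → α (i + 1) = 0) := by
  have hmono : ∀ d i, i + d = s → P s ≤ P i := by
    intro d
    induction d with
    | zero => intro i hi; simp only [Nat.add_zero] at hi; rw [hi]
    | succ d ih =>
      intro i hi
      have h1 : P s ≤ P (i + 1) := ih (i + 1) (by omega)
      have h2 : P (i + 1) < P i := by
        have := hdec (i + 1) (by omega) (by omega)
        simpa using this
      omega
  have hPpos : ∀ i, i ≤ s → 0 < P i := by
    intro i hi
    have := hmono (s - i) i (by omega)
    omega
  have main : ∀ n j r, s ≤ j + n → j < s → 0 < r → r < P j →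
      ∃ (α : ℕ → ℕ) (h : ℕ), j + 1 ≤ h ∧ h ≤ s ∧
        r = ∑ i ∈ Finset.Icc (j + 1) h, α i * P i ∧
        (∀ i ∈ Finset.Icc (j + 1) h, α i ≤ k i) ∧
        0 < α h ∧
        (∀ i, j + 1 ≤ i → i < h → α i = k i → α (i + 1) = 0) := by
    intro n
    induction n with
    | zero => intro j r h1 h2; omega
    | succ n ih =>
      intro j r hn hj hr hrP
      by_cases hc : j + 1 = s
      · -- base case: j = s - 1, P (j+1) = P s = 1
        refine ⟨fun _ => r, j + 1, le_refl _, by omega, ?_, ?_, hr, ?_⟩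
        · rw [Finset.Icc_self, Finset.sum_singleton]
          show r = r * P (j + 1)
          rw [hc, hPs, mul_one]
        · intro i hi
          simp only [Finset.Icc_self, Finset.mem_singleton] at hi
          subst hi
          show r ≤ k (j + 1)
          rw [hc, hks]
          have hj' : s - 1 = j := by omega
          rw [hj']
          omega
        · intro i hi1 hi2; omega
      · -- inductive case: j + 1 < s
        have hc' : j + 1 < s := by omega
        have hrecj : P j = k (j + 1) * P (j + 1) + P (j + 2) := by
          have := hrec (j + 1) (by omega) (by omega)
          simpa using this
        have hP1 : 0 < P (j + 1) := hPpos (j + 1) (by omega)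
        have hP2lt : P (j + 2) < P (j + 1) := by
          have := hdec (j + 2) (by omega) (by omega)
          simpa using this
        obtain ⟨q, r', hdm, hr'lt⟩ : ∃ q r', q * P (j + 1) + r' = r ∧ r' < P (j + 1) :=
          ⟨r / P (j + 1), r % P (j + 1), Nat.div_add_mod' r (P (j + 1)), Nat.mod_lt _ hP1⟩
        have hqk : q ≤ k (j + 1) := by
          by_contra hgt
          push_neg at hgt
          have h1 : (k (j + 1) + 1) * P (j + 1) ≤ q * P (j + 1) :=
            Nat.mul_le_mul_right _ (by omega)
          have h2 : (k (j + 1) + 1) * P (j + 1) = k (j + 1) * P (j + 1) + P (j + 1) := by ring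
          omega
        have hqeq : q = k (j + 1) → r' < P (j + 2) := by
          intro he
          rw [he] at hdm
          omega
        by_cases hr0 : r' = 0
        · -- r = q * P (j+1)
          have hqpos : 0 < q := by
            rcases Nat.eq_zero_or_pos q with h0 | h0
            · rw [h0] at hdm; simp at hdm; omega
            · exact h0
          refine ⟨fun i => if i = j + 1 then q else 0, j + 1, le_refl _, by omega, ?_, ?_, ?_, ?_⟩
          · rw [Finset.Icc_self, Finset.sum_singleton]
            show r = (if j + 1 = j + 1 then q else 0) * P (j + 1)
            rw [if_pos rfl]
            omega
          · intro i hi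
            simp only [Finset.Icc_self, Finset.mem_singleton] at hi
            subst hi
            show (if j + 1 = j + 1 then q else 0) ≤ k (j + 1)
            rw [if_pos rfl]
            exact hqk
          · show 0 < if j + 1 = j + 1 then q else 0
            rw [if_pos rfl]; exact hqpos
          · intro i hi1 hi2; omega
        · -- recurse on r'
          obtain ⟨α', h', hh1, hh2, hsum, hbd, hαh, hchain⟩ :=
            ih (j + 1) r' (by omega) hc' (by omega) hr'lt
          refine ⟨fun i => if i = j + 1 then q else α' i, h', by omega, hh2, ?_, ?_, ?_, ?_⟩
          · have hins : Finset.Icc (j + 1) h' = insert (j + 1) (Finset.Icc (j + 2) h') := by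
              ext x
              simp only [Finset.mem_Icc, Finset.mem_insert]
              omega
            rw [hins, Finset.sum_insert (by simp)]
            have he1 : (fun i => if i = j + 1 then q else α' i) (j + 1) * P (j + 1)
                = q * P (j + 1) := by simp
            have he2 : ∑ i ∈ Finset.Icc (j + 2) h',
                (fun i => if i = j + 1 then q else α' i) i * P i
                = ∑ i ∈ Finset.Icc (j + 2) h', α' i * P i := by
              apply Finset.sum_congr rfl
              intro x hx
              simp only [Finset.mem_Icc] at hx
              simp only []
              rw [if_neg (by omega)]
            rw [he1, he2, ← hsum]
            omega
          · intro i hi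
            simp only [Finset.mem_Icc] at hi
            by_cases he : i = j + 1
            · subst he
              show (if j + 1 = j + 1 then q else α' (j + 1)) ≤ k (j + 1)
              rw [if_pos rfl]; exact hqk
            · show (if i = j + 1 then q else α' i) ≤ k i
              rw [if_neg he]
              exact hbd i (Finset.mem_Icc.2 ⟨by omega, hi.2⟩)
          · show 0 < if h' = j + 1 then q else α' h'
            rw [if_neg (by omega)]; exact hαh
          · intro i hi1 hi2 hik
            simp only [] at hik
            by_cases he : i = j + 1
            · subst he
              rw [if_pos rfl] at hik
              have hr'2 : r' < P (j + 2) := hqeq hik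
              show (if j + 1 + 1 = j + 1 then q else α' (j + 2)) = 0
              rw [if_neg (by omega)]
              have hmem : j + 2 ∈ Finset.Icc (j + 1 + 1) h' := Finset.mem_Icc.2 ⟨by omega, by omega⟩
              have hle : α' (j + 2) * P (j + 2) ≤ r' := by
                rw [hsum]
                exact Finset.single_le_sum (f := fun i => α' i * P i) (fun i _ => Nat.zero_le _) hmem
              have hPpos2 : 0 < P (j + 2) := hPpos (j + 2) (by omega)
              by_contra hne
              have h1 : 1 ≤ α' (j + 2) := by omega
              have h2 : P (j + 2) ≤ α' (j + 2) * P (j + 2) := by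
                calc P (j + 2) = 1 * P (j + 2) := by ring
                _ ≤ α' (j + 2) * P (j + 2) := Nat.mul_le_mul_right _ h1
              omega
            · rw [if_neg he] at hik
              show (if i + 1 = j + 1 then q else α' (i + 1)) = 0
              rw [if_neg (by omega)]
              exact hchain i (by omega) hi2 hik
  intro r j hj hr hrP
  exact main s j r (by omega) hj hr hrP
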